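/- arXiv:1204.5011 — 3 statements merged into one kernel-verified Lean document; each statement's English description precedes it below -/
import Mathlib

section
/- Let n be an odd integer with binary expansion n = 2^{e_1} + 2^{e_2} + ⋯ + 2^{e_N} + 1, where N ≥ 2 and e_1 > e_2 > ⋯ > e_N > 0. If e_1 − e_2 = 1, then the length of the sequence of lower halves of n is l(n) = e_1 − 1 and its tail is t(n) = 3. -/
/-- The lower half of a positive integer: `lh m = ⌊m/2⌋`. -/
def lh (m : ℕ) : ℕ := m / 2

/-- The length of the sequence of lower halves of `n`: the least positive `i`
such that the `i`-th iterate of `lh` at `n` lies in `{2, 3, 4}`. -/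
noncomputable def lhLen (n : ℕ) : ℕ :=
  sInf {i : ℕ | 0 < i ∧ lh^[i] n ∈ ({2, 3, 4} : Set ℕ)}

/-- The tail of the sequence of lower halves of `n`: its last term. -/
noncomputable def lhTail (n : ℕ) : ℕ := lh^[lhLen n] n

lemma lh_iter (n i : ℕ) : lh^[i] n = n / 2 ^ i := by
  induction i with
  | zero => simp
  | succ k ih =>
    rw [Function.iterate_succ_apply', ih, lh, Nat.div_div_eq_div_mul, pow_succ]

lemma sum_range_two_pow (n : ℕ) : ∑ k ∈ Finset.range n, 2 ^ k = 2 ^ n - 1 := by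
  induction n with
  | zero => simp
  | succ k ih =>
    rw [Finset.sum_range_succ, ih]
    have : 1 ≤ 2 ^ k := Nat.one_le_two_pow
    rw [pow_succ]; omega

theorem lhLen_lhTail_of_gap_one (n N : ℕ) (e : ℕ → ℕ) (hN : 2 ≤ N)
    (hanti : ∀ i j : ℕ, i < j → j < N → e j < e i)
    (hpos : ∀ i : ℕ, i < N → 0 < e i)
    (hn : n = (∑ i ∈ Finset.range N, 2 ^ e i) + 1)
    (hgap : e 0 = e 1 + 1) :
    lhLen n = e 0 - 1 ∧ lhTail n = 3 := by
  have he1 : 0 < e 1 := hpos 1 (by omega)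
  set S := ∑ i ∈ Finset.Ico 2 N, 2 ^ e i with hS
  have hsplit : n = 3 * 2 ^ e 1 + (S + 1) := by
    rw [hn, Finset.range_eq_Ico,
      Finset.sum_eq_sum_Ico_succ_bot (by omega : 0 < N),
      Finset.sum_eq_sum_Ico_succ_bot (by omega : 1 < N)]
    have h0 : (2 : ℕ) ^ e 0 = 2 * 2 ^ e 1 := by rw [hgap, pow_succ]; ring
    rw [h0]; ring
  have hSlt : S + 1 < 2 ^ e 1 := by
    have himg : S = ∑ k ∈ (Finset.Ico 2 N).image e, 2 ^ k := by
      rw [Finset.sum_image]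
      intro a ha b hb hab
      simp only [Finset.mem_coe, Finset.mem_Ico] at ha hb
      by_contra hne
      rcases Nat.lt_or_ge a b with h | h
      · exact absurd hab (Nat.ne_of_gt (hanti a b h hb.2))
      · exact absurd hab.symm (Nat.ne_of_gt (hanti b a (by omega) ha.2))
    have hsub : (Finset.Ico 2 N).image e ⊆ Finset.Ico 1 (e 1) := by
      intro k hk
      simp only [Finset.mem_image, Finset.mem_Ico] at hk ⊢
      obtain ⟨i, ⟨hi2, hiN⟩, rfl⟩ := hk
      exact ⟨hpos i hiN, hanti 1 i (by omega) hiN⟩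
    have hle : S ≤ ∑ k ∈ Finset.Ico 1 (e 1), 2 ^ k := by
      rw [himg]; exact Finset.sum_le_sum_of_subset hsub
    have hsum : (2 : ℕ) ^ 0 + ∑ k ∈ Finset.Ico 1 (e 1), 2 ^ k = 2 ^ e 1 - 1 := by
      have h := sum_range_two_pow (e 1)
      rw [Finset.range_eq_Ico, Finset.sum_eq_sum_Ico_succ_bot he1] at h
      exact h
    have hp : 1 ≤ 2 ^ e 1 := Nat.one_le_two_pow
    simp only [pow_zero] at hsum
    omega
  have hdiv : n / 2 ^ e 1 = 3 := by
    rw [hsplit, mul_comm, Nat.mul_add_div (by positivity),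
      Nat.div_eq_of_lt hSlt]
  have hbig : ∀ i, i < e 1 → 4 < n / 2 ^ i := by
    intro i hi
    have h1 : 3 * 2 ^ (e 1 - i) * 2 ^ i ≤ n := by
      rw [hsplit, mul_assoc, ← pow_add]
      have : e 1 - i + i = e 1 := by omega
      rw [this]; omega
    have h2 : 3 * 2 ^ (e 1 - i) ≤ n / 2 ^ i :=
      (Nat.le_div_iff_mul_le (by positivity)).mpr h1
    have h3 : (2 : ℕ) ≤ 2 ^ (e 1 - i) := by
      calc (2 : ℕ) = 2 ^ 1 := rfl
      _ ≤ 2 ^ (e 1 - i) := Nat.pow_le_pow_right (by norm_num) (by omega)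
    have h4 : 6 ≤ 3 * 2 ^ (e 1 - i) := by omega
    omega
  have hmem : e 1 ∈ {i : ℕ | 0 < i ∧ lh^[i] n ∈ ({2, 3, 4} : Set ℕ)} := by
    refine ⟨he1, ?_⟩
    rw [lh_iter, hdiv]
    simp
  have hlen : lhLen n = e 1 := by
    refine le_antisymm (Nat.sInf_le hmem) ?_
    refine le_csInf ⟨_, hmem⟩ ?_
    rintro i ⟨hip, hi⟩
    by_contra h
    push_neg at h
    have h5 := hbig i h
    rw [lh_iter] at hi
    simp only [Set.mem_insert_iff, Set.mem_singleton_iff] at hi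
    omega
  refine ⟨by rw [hlen]; omega, ?_⟩
  rw [lhTail, hlen, lh_iter, hdiv]
end

section
/- Let n be an odd integer with binary expansion n = 2^{e_1} + 2^{e_2} + ⋯ + 2^{e_N} + 1, where N ≥ 2 and e_1 > e_2 > ⋯ > e_N > 0. If e_1 − e_2 = 2, then the length of the sequence of lower halves of n is l(n) = e_1 − 1 and its tail is t(n) = 2. -/
lemma lh_iterate (k m : ℕ) : lh^[k] m = m / 2 ^ k := by
  induction k with
  | zero => simp
  | succ k ih =>
    rw [Function.iterate_succ_apply', ih, lh, Nat.div_div_eq_div_mul, pow_succ]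

theorem lhLen_lhTail_of_gap_two (n N : ℕ) (e : ℕ → ℕ) (hN : 2 ≤ N)
    (hanti : ∀ i j : ℕ, i < j → j < N → e j < e i)
    (hpos : ∀ i : ℕ, i < N → 0 < e i)
    (hn : n = (∑ i ∈ Finset.range N, 2 ^ e i) + 1)
    (hgap : e 0 = e 1 + 2) :
    lhLen n = e 0 - 1 ∧ lhTail n = 2 := by
  have he1 : 0 < e 1 := hpos 1 (by omega)
  -- split the sum
  have hsplit : ∑ i ∈ Finset.range N, 2 ^ e i
      = 2 ^ e 0 + 2 ^ e 1 + ∑ i ∈ Finset.Ico 2 N, 2 ^ e i := by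
    rw [Finset.range_eq_Ico, ← Finset.sum_Ico_consecutive _ (by omega : 0 ≤ 2) hN]
    norm_num [Finset.sum_Ico_eq_sum_range, Finset.sum_range_succ]
  set r : ℕ := (∑ i ∈ Finset.Ico 2 N, 2 ^ e i) + 1 with hr
  have hnval : n = 5 * 2 ^ e 1 + r := by
    rw [hn, hsplit, hgap]; ring
  -- bound r
  have hrlt : r < 2 ^ e 1 := by
    have himg : ∀ i ∈ Finset.Ico 2 N, e i ∈ Finset.Ico 1 (e 1) := by
      intro i hi
      simp only [Finset.mem_Ico] at hi ⊢
      exact ⟨hpos i hi.2, hanti 1 i hi.1 hi.2⟩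
    have hinj : ∀ i ∈ Finset.Ico 2 N, ∀ j ∈ Finset.Ico 2 N, e i = e j → i = j := by
      intro i hi j hj hij
      simp only [Finset.mem_Ico] at hi hj
      rcases lt_trichotomy i j with h | h | h
      · exact absurd hij (Nat.ne_of_lt (hanti i j h hj.2)).symm
      · exact h
      · exact absurd hij (Nat.ne_of_gt (hanti j i h hi.2)).symm
    have hsum : ∑ i ∈ Finset.Ico 2 N, 2 ^ e i
        = ∑ j ∈ (Finset.Ico 2 N).image e, 2 ^ j := by
      rw [Finset.sum_image hinj]
    have hle : ∑ j ∈ (Finset.Ico 2 N).image e, 2 ^ j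
        ≤ ∑ j ∈ Finset.Ico 1 (e 1), 2 ^ j := by
      apply Finset.sum_le_sum_of_subset
      intro j hj
      obtain ⟨i, hi, rfl⟩ := Finset.mem_image.mp hj
      exact himg i hi
    have hgeom : ∑ j ∈ Finset.Ico 1 (e 1), 2 ^ j = 2 ^ e 1 - 2 := by
      have h1 : ∑ j ∈ Finset.range (e 1), 2 ^ j = 2 ^ e 1 - 1 :=
        by
        have := Nat.geomSum_eq (le_refl 2) (e 1)
        simpa using this
      have h2 : ∑ j ∈ Finset.range (e 1), 2 ^ j
          = 2 ^ 0 + ∑ j ∈ Finset.Ico 1 (e 1), 2 ^ j := by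
        rw [Finset.range_eq_Ico, ← Finset.sum_Ico_consecutive _ (Nat.zero_le 1) he1]
        norm_num
      have h3 : 2 ≤ 2 ^ e 1 := by
        calc 2 = 2 ^ 1 := rfl
        _ ≤ 2 ^ e 1 := Nat.pow_le_pow_right (by norm_num) he1
      omega
    have h3 : 2 ≤ 2 ^ e 1 := by
      calc 2 = 2 ^ 1 := rfl
      _ ≤ 2 ^ e 1 := Nat.pow_le_pow_right (by norm_num) he1
    rw [hr, hsum]
    omega
  -- key division facts
  have hdiv5 : n / 2 ^ e 1 = 5 := by
    rw [hnval, Nat.add_comm, mul_comm,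
      Nat.add_mul_div_left r 5 (Nat.two_pow_pos (e 1)),
      Nat.div_eq_of_lt hrlt]
  have hdiv2 : n / 2 ^ (e 1 + 1) = 2 := by
    rw [pow_succ, ← Nat.div_div_eq_div_mul, hdiv5]
  have hmono : ∀ k, k ≤ e 1 → 5 ≤ n / 2 ^ k := by
    intro k hk
    calc 5 = n / 2 ^ e 1 := hdiv5.symm
    _ ≤ n / 2 ^ k := Nat.div_le_div_left (Nat.pow_le_pow_right (by norm_num) hk)
        (Nat.two_pow_pos _)
  set S := {i : ℕ | 0 < i ∧ lh^[i] n ∈ ({2, 3, 4} : Set ℕ)} with hS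
  have hmem : e 1 + 1 ∈ S := by
    constructor
    · omega
    · rw [lh_iterate, hdiv2]; simp
  have hlb : ∀ m ∈ S, e 1 + 1 ≤ m := by
    intro m hm
    by_contra h
    have hmle : m ≤ e 1 := by omega
    have := hmono m hmle
    obtain ⟨-, hm2⟩ := hm
    rw [lh_iterate] at hm2
    simp only [Set.mem_insert_iff, Set.mem_singleton_iff] at hm2
    omega
  have hne : S.Nonempty := ⟨e 1 + 1, hmem⟩
  have hlen : lhLen n = e 1 + 1 := by
    have h1 : lhLen n ≤ e 1 + 1 := Nat.sInf_le hmem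
    have h2 : e 1 + 1 ≤ lhLen n := hlb _ (Nat.sInf_mem hne)
    omega
  constructor
  · rw [hlen]; omega
  · rw [lhTail, hlen, lh_iterate, hdiv2]
end

section
/- Let p > 7 be a prime with binary expansion p = 2^{e_1} + 2^{e_2} + ⋯ + 2^{e_N} + 1, where N ≥ 1 and e_1 > e_2 > ⋯ > e_N > 0, and suppose that either N = 1 or e_1 − e_2 > 2. Then, as real numbers, (3 + 2·l(p))/2^{3 + l(p)} < (t(p) + 2·l(p) − 1)/p < (3 + 2·l(p))/2^{2 + l(p)}, where l(p) and t(p) are the length and tail of the sequence of lower halves of p. -/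
lemma sum_Icc_pow (m : ℕ) : ∑ j ∈ Finset.Icc 1 m, 2 ^ j = 2 ^ (m + 1) - 2 := by
  induction m with
  | zero => simp
  | succ m ih =>
      rw [Finset.sum_Icc_succ_top (by omega), ih, pow_succ]
      have : 2 ≤ 2 ^ (m + 1) := Nat.one_lt_two_pow (by omega)
      omega

theorem ratio_bounds_of_gap_large (p N : ℕ) (e : ℕ → ℕ) (hp : p.Prime) (h7 : 7 < p)
    (hN : 1 ≤ N)
    (hanti : ∀ i j : ℕ, i < j → j < N → e j < e i)
    (hpos : ∀ i : ℕ, i < N → 0 < e i)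
    (hexp : p = (∑ i ∈ Finset.range N, 2 ^ e i) + 1)
    (hgap : N = 1 ∨ e 1 + 2 < e 0) :
    (3 + 2 * (lhLen p : ℝ)) / 2 ^ (3 + lhLen p)
        < ((lhTail p : ℝ) + 2 * (lhLen p : ℝ) - 1) / (p : ℝ) ∧
      ((lhTail p : ℝ) + 2 * (lhLen p : ℝ) - 1) / (p : ℝ)
        < (3 + 2 * (lhLen p : ℝ)) / 2 ^ (2 + lhLen p) := by
  set k := e 0 with hk
  -- key bounds
  have key : 3 ≤ k ∧ 2 ^ k < p ∧ p < 2 ^ k + 2 ^ (k - 2) := by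
    rcases eq_or_lt_of_le hN with h1 | h2
    · -- N = 1
      have hexp' : p = 2 ^ k + 1 := by
        rw [hexp, ← h1]; simp [hk]
      have hk3 : 3 ≤ k := by
        by_contra h
        interval_cases k <;> omega
      have : 2 ≤ 2 ^ (k - 2) := by
        calc 2 = 2 ^ 1 := rfl
        _ ≤ 2 ^ (k - 2) := Nat.pow_le_pow_right (by norm_num) (by omega)
      exact ⟨hk3, by omega, by omega⟩
    · -- 2 ≤ N
      have hgap' : e 1 + 2 < k := by
        rcases hgap with h | h
        · omega
        · exact h
      have he1 : 0 < e 1 := hpos 1 h2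
      have hk3 : 3 ≤ k := by omega
      obtain ⟨M, hM⟩ : ∃ M, N = M + 1 := ⟨N - 1, by omega⟩
      have hexp' : p = (∑ i ∈ Finset.range M, 2 ^ e (i + 1)) + 2 ^ k + 1 := by
        rw [hexp, hM, Finset.sum_range_succ']
      set S := ∑ i ∈ Finset.range M, 2 ^ e (i + 1) with hS
      have hinj : Set.InjOn (fun i => e (i + 1)) (Finset.range M) := by
        intro a ha b hb hab
        simp only [Finset.coe_range, Set.mem_Iio] at ha hb
        by_contra hne
        rcases Nat.lt_or_ge a b with h | h
        · have := hanti (a + 1) (b + 1) (by omega) (by omega); simp at hab; omega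
        · have := hanti (b + 1) (a + 1) (by omega) (by omega); simp at hab; omega
      have hsub : (Finset.range M).image (fun i => e (i + 1)) ⊆ Finset.Icc 1 (k - 3) := by
        intro j hj
        simp only [Finset.mem_image, Finset.mem_range] at hj
        obtain ⟨i, hi, rfl⟩ := hj
        have h1 : 0 < e (i + 1) := hpos (i + 1) (by omega)
        have h2' : e (i + 1) ≤ e 1 := by
          rcases Nat.eq_or_lt_of_le (Nat.one_le_iff_ne_zero.mpr (by omega) : 1 ≤ i + 1) with h | h
          · rw [← h]
          · exact le_of_lt (hanti 1 (i + 1) h (by omega))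
        simp [Finset.mem_Icc]; omega
      have hSle : S ≤ 2 ^ (k - 2) - 2 := by
        have h1 : S = ∑ j ∈ (Finset.range M).image (fun i => e (i + 1)), 2 ^ j :=
          (Finset.sum_image (fun a ha b hb hab => hinj ha hb hab)).symm
        have h2' : ∑ j ∈ (Finset.range M).image (fun i => e (i + 1)), 2 ^ j
            ≤ ∑ j ∈ Finset.Icc 1 (k - 3), 2 ^ j :=
          Finset.sum_le_sum_of_subset hsub
        have h3 : (k - 3) + 1 = k - 2 := by omega
        rw [h1]
        calc _ ≤ ∑ j ∈ Finset.Icc 1 (k - 3), 2 ^ j := h2'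
        _ = 2 ^ (k - 2) - 2 := by rw [sum_Icc_pow, h3]
      have h2p : 2 ≤ 2 ^ (k - 2) := by
        calc 2 = 2 ^ 1 := rfl
        _ ≤ 2 ^ (k - 2) := Nat.pow_le_pow_right (by norm_num) (by omega)
      exact ⟨hk3, by omega, by omega⟩
  obtain ⟨hk3, hlow, hup⟩ := key
  have hdiv : p / 2 ^ (k - 2) = 4 := by
    have h1 : 2 ^ (k - 2) * 4 ≤ p := by
      have : 2 ^ (k - 2) * 4 = 2 ^ k := by
        have : 2 ^ (k - 2) * 2 ^ 2 = 2 ^ k := by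
          rw [← pow_add]; congr 1; omega
        simpa using this
      omega
    have h2 : p < 2 ^ (k - 2) * 5 := by
      have : 2 ^ (k - 2) * 4 = 2 ^ k := by
        have : 2 ^ (k - 2) * 2 ^ 2 = 2 ^ k := by
          rw [← pow_add]; congr 1; omega
        simpa using this
      omega
    have := pow_pos (show (0:ℕ) < 2 by norm_num) (k-2)
    exact Nat.div_eq_of_lt_le (by omega) (by omega)
  have hmem : (k - 2) ∈ {i : ℕ | 0 < i ∧ lh^[i] p ∈ ({2, 3, 4} : Set ℕ)} := by
    constructor
    · omega
    · rw [lh_iter, hdiv]; simp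
  have hL : lhLen p = k - 2 := by
    have hle : lhLen p ≤ k - 2 := Nat.sInf_le hmem
    have hmem' : lhLen p ∈ {i : ℕ | 0 < i ∧ lh^[i] p ∈ ({2, 3, 4} : Set ℕ)} :=
      Nat.sInf_mem ⟨k - 2, hmem⟩
    obtain ⟨hpos', hval⟩ := hmem'
    rw [lh_iter] at hval
    simp only [Set.mem_insert_iff, Set.mem_singleton_iff] at hval
    have hval4 : p / 2 ^ (lhLen p) ≤ 4 := by
      rcases hval with h | h | h <;> omega
    have h5 : p < 5 * 2 ^ (lhLen p) := by
      have := Nat.lt_succ_of_le hval4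
      have := (Nat.div_lt_iff_lt_mul (pow_pos (by norm_num : (0:ℕ) < 2) (lhLen p))).mp this
      omega
    have h8 : p < 2 ^ (lhLen p + 3) := by
      have : 5 * 2 ^ (lhLen p) ≤ 8 * 2 ^ (lhLen p) := by
        apply Nat.mul_le_mul_right; norm_num
      calc p < 5 * 2 ^ (lhLen p) := h5
      _ ≤ 8 * 2 ^ (lhLen p) := this
      _ = 2 ^ (lhLen p + 3) := by rw [pow_add]; ring
    have hkl : 2 ^ k < 2 ^ (lhLen p + 3) := lt_trans hlow h8
    have : k < lhLen p + 3 := by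
      exact (Nat.pow_lt_pow_iff_right (by norm_num : 1 < 2)).mp hkl
    omega
  have hT : lhTail p = 4 := by
    rw [lhTail, hL, lh_iter, hdiv]
  -- final real arithmetic
  have hupk : p < 2 ^ (k + 1) := by
    have : 2 ^ (k - 2) ≤ 2 ^ k := Nat.pow_le_pow_right (by norm_num) (by omega)
    have : 2 ^ k + 2 ^ k = 2 ^ (k + 1) := by rw [pow_succ]; ring
    omega
  have e2 : 2 + lhLen p = k := by omega
  have e3 : 3 + lhLen p = k + 1 := by omega
  have hpR : (0 : ℝ) < p := by positivity
  have hlowR : (2 : ℝ) ^ k < p := by exact_mod_cast hlow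
  have hupR : (p : ℝ) < 2 ^ (k + 1) := by exact_mod_cast hupk
  have hnum : (0 : ℝ) < 3 + 2 * (lhLen p : ℝ) := by positivity
  have heq : ((lhTail p : ℝ) + 2 * (lhLen p : ℝ) - 1) = 3 + 2 * (lhLen p : ℝ) := by
    rw [hT]; push_cast; ring
  rw [heq, e2, e3]
  constructor
  · exact div_lt_div_of_pos_left hnum hpR hupR
  · exact div_lt_div_of_pos_left hnum (by positivity) hlowR
end
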